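/- Let ε ∈ (1/2, 1], λ ≥ 1/(2ε), n ≥ 2, and consider the continuous-time Markov chain Q on ℤ_+^n where arrivals occur at rate nλ, each arrival samples an unordered pair {i,j} uniformly and joins server i with probability p(Q_i,Q_j) = (1−ε)1{Q_i<Q_j} + ε·1{Q_i>Q_j} + 1{Q_i=Q_j, i<j}, and each nonempty server completes service at rate 1. Then for the Lyapunov function V₂(Q) = max_i Q_i (evaluated at the smallest maximizing index), the drift satisfies D V₂(Q) ≥ 2ελ − 1 ≥ 0 for all states Q, and D V₂(Q) ≤ nλ. -/

import Mathlib

open Finset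

/-- Join probability under the Po2-ε scheme. -/
noncomputable def pEps (ε : ℝ) {n : ℕ} (qi qj : ℕ) (i j : Fin n) : ℝ :=
  (1 - ε) * (if qi < qj then 1 else 0) + ε * (if qj < qi then 1 else 0)
  + (if qi = qj ∧ i < j then 1 else 0)

/-- Arrival rate to server i. -/
noncomputable def rPlusEps (lam ε : ℝ) {n : ℕ} (Q : Fin n → ℕ) (i : Fin n) : ℝ :=
  (2 * lam / ((n : ℝ) - 1)) * ∑ j ∈ Finset.univ.erase i, pEps ε (Q i) (Q j) i j

/-- Lyapunov function `V₂(Q) = max_i Q_i`. -/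
noncomputable def Vmax {n : ℕ} (Q : Fin n → ℕ) : ℝ := ((Finset.univ.sup Q : ℕ) : ℝ)

/-- Generator drift of `Vmax`. -/
noncomputable def driftVmax (lam ε : ℝ) {n : ℕ} (Q : Fin n → ℕ) : ℝ :=
  ∑ i, (rPlusEps lam ε Q i * (Vmax (Function.update Q i (Q i + 1)) - Vmax Q)
    + (if 0 < Q i then (1 : ℝ) else 0) * (Vmax (Function.update Q i (Q i - 1)) - Vmax Q))

/-- Updating a coordinate with a value below the max, when the max is attained
elsewhere, does not change the max. -/
lemma sup_update_of_exists {n : ℕ} (Q : Fin n → ℕ) (i : Fin n) (v : ℕ)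
    (hv : v ≤ Finset.univ.sup Q)
    (hk : ∃ k, k ≠ i ∧ Q k = Finset.univ.sup Q) :
    Finset.univ.sup (Function.update Q i v) = Finset.univ.sup Q := by
  obtain ⟨k, hki, hk⟩ := hk
  apply le_antisymm
  · refine Finset.sup_le fun j _ => ?_
    rcases eq_or_ne j i with rfl | h
    · simpa using hv
    · rw [Function.update_of_ne h]
      exact Finset.le_sup (Finset.mem_univ j)
  · calc Finset.univ.sup Q = Function.update Q i v k := by
          rw [Function.update_of_ne hki, hk]
       _ ≤ _ := Finset.le_sup (Finset.mem_univ k)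

/-- Incrementing a maximizing coordinate increases the max by one. -/
lemma sup_update_max {n : ℕ} (Q : Fin n → ℕ) (i : Fin n)
    (h : Q i = Finset.univ.sup Q) :
    Finset.univ.sup (Function.update Q i (Q i + 1)) = Finset.univ.sup Q + 1 := by
  apply le_antisymm
  · refine Finset.sup_le fun j _ => ?_
    rcases eq_or_ne j i with rfl | hj
    · simp [h]
    · rw [Function.update_of_ne hj]
      exact le_trans (Finset.le_sup (Finset.mem_univ j)) (Nat.le_succ _)
  · calc Finset.univ.sup Q + 1 = Function.update Q i (Q i + 1) i := by simp [h]
      _ ≤ _ := Finset.le_sup (Finset.mem_univ i)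

/-- Decrementing a coordinate does not increase the max. -/
lemma sup_dec_le {n : ℕ} (Q : Fin n → ℕ) (i : Fin n) :
    Finset.univ.sup (Function.update Q i (Q i - 1)) ≤ Finset.univ.sup Q := by
  refine Finset.sup_le fun j _ => ?_
  rcases eq_or_ne j i with rfl | hj
  · simp only [Function.update_self]
    exact le_trans (Nat.sub_le _ _) (Finset.le_sup (Finset.mem_univ j))
  · rw [Function.update_of_ne hj]; exact Finset.le_sup (Finset.mem_univ j)

/-- Decrementing a coordinate decreases the max by at most one. -/
lemma sup_dec_ge {n : ℕ} (Q : Fin n → ℕ) (i : Fin n)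
    (hk : ∃ k, Q k = Finset.univ.sup Q) :
    Finset.univ.sup Q - 1 ≤ Finset.univ.sup (Function.update Q i (Q i - 1)) := by
  obtain ⟨k, hk⟩ := hk
  rcases eq_or_ne k i with rfl | hki
  · calc Finset.univ.sup Q - 1 = Function.update Q k (Q k - 1) k := by simp [hk]
      _ ≤ _ := Finset.le_sup (Finset.mem_univ k)
  · calc Finset.univ.sup Q - 1 ≤ Q k := by omega
      _ = Function.update Q i (Q i - 1) k := (Function.update_of_ne hki _ _).symm
      _ ≤ _ := Finset.le_sup (Finset.mem_univ k)

/-- The number of ordered pairs `(i,j)` of distinct elements of `S` with `i < j`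
is `|S|(|S|-1)/2`. -/
lemma pair_count {n : ℕ} (S : Finset (Fin n)) :
    2 * (∑ i ∈ S, ∑ j ∈ S.erase i, (if i < j then (1:ℝ) else 0))
      = (S.card : ℝ) * ((S.card : ℝ) - 1) := by
  have hswap : ∑ i ∈ S, ∑ j ∈ S.erase i, (if i < j then (1:ℝ) else 0)
      = ∑ i ∈ S, ∑ j ∈ S.erase i, (if j < i then (1:ℝ) else 0) := by
    refine Finset.sum_comm' ?_
    intro x y
    simp only [Finset.mem_erase]
    constructor
    · rintro ⟨hx, hy, hyS⟩; exact ⟨⟨fun e => hy e.symm, hx⟩, hyS⟩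
    · rintro ⟨⟨hx, hxS⟩, hyS⟩; exact ⟨hxS, fun e => hx e.symm, hyS⟩
  have h2 : ∑ i ∈ S, ∑ j ∈ S.erase i,
      ((if i < j then (1:ℝ) else 0) + (if j < i then (1:ℝ) else 0))
      = (S.card : ℝ) * ((S.card : ℝ) - 1) := by
    have : ∀ i ∈ S, ∑ j ∈ S.erase i,
        ((if i < j then (1:ℝ) else 0) + (if j < i then (1:ℝ) else 0))
        = ((S.card : ℝ) - 1) := by
      intro i hi
      rw [Finset.sum_congr rfl (fun j hj => ?_), Finset.sum_const]
      · rw [Finset.card_erase_of_mem hi, nsmul_eq_mul, mul_one,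
          Nat.cast_sub (Finset.card_pos.2 ⟨i, hi⟩)]
        norm_num
      · have hne : j ≠ i := (Finset.mem_erase.1 hj).1
        rcases lt_or_gt_of_ne hne with h | h
        · rw [if_neg (asymm h), if_pos h]; ring
        · rw [if_pos h, if_neg (asymm h)]; ring
    rw [Finset.sum_congr rfl this, Finset.sum_const, nsmul_eq_mul]
  calc 2 * (∑ i ∈ S, ∑ j ∈ S.erase i, (if i < j then (1:ℝ) else 0))
      = (∑ i ∈ S, ∑ j ∈ S.erase i, (if i < j then (1:ℝ) else 0))
        + (∑ i ∈ S, ∑ j ∈ S.erase i, (if j < i then (1:ℝ) else 0)) := by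
        rw [← hswap]; ring
    _ = (S.card : ℝ) * ((S.card : ℝ) - 1) := by
        rw [← h2, ← Finset.sum_add_distrib]
        refine Finset.sum_congr rfl fun i _ => ?_
        rw [← Finset.sum_add_distrib]

set_option maxHeartbeats 1000000 in
theorem po2eps_instability_drift (ε lam : ℝ) (hε1 : 1/2 < ε) (hε2 : ε ≤ 1)
    (hlam : 1 / (2 * ε) ≤ lam) (n : ℕ) (hn : 2 ≤ n) (Q : Fin n → ℕ) :
    (2 * ε * lam - 1 ≤ driftVmax lam ε Q ∧ 0 ≤ 2 * ε * lam - 1) ∧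
    driftVmax lam ε Q ≤ (n : ℝ) * lam := by
  have hεpos : 0 < ε := by linarith
  have hlampos : 0 < lam := lt_of_lt_of_le (by positivity) hlam
  set M := Finset.univ.sup Q with hMdef
  have hne : (Finset.univ : Finset (Fin n)).Nonempty :=
    ⟨⟨0, by omega⟩, Finset.mem_univ _⟩
  obtain ⟨k₀, -, hk₀⟩ := Finset.exists_mem_eq_sup Finset.univ hne Q
  set S := Finset.univ.filter (fun i => Q i = M) with hSdef
  have hmemS : ∀ i, i ∈ S ↔ Q i = M := by intro i; simp [hSdef]
  have hk₀S : k₀ ∈ S := (hmemS k₀).2 hk₀.symm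
  have hScard1 : 1 ≤ S.card := Finset.card_pos.2 ⟨k₀, hk₀S⟩
  have hScardn : S.card ≤ n := le_trans (Finset.card_filter_le _ _) (by simp)
  have hle : ∀ i, Q i ≤ M := fun i => Finset.le_sup (Finset.mem_univ i)
  -- increase deltas
  have hΔplus : ∀ i, Vmax (Function.update Q i (Q i + 1)) - Vmax Q
      = if Q i = M then 1 else 0 := by
    intro i
    by_cases h : Q i = M
    · rw [if_pos h]
      unfold Vmax
      rw [← hMdef, sup_update_max Q i h]
      push_cast; ring
    · rw [if_neg h]
      unfold Vmax
      rw [← hMdef, sup_update_of_exists Q i (Q i + 1)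
        (by have := hle i; omega)
        ⟨k₀, fun e => h (e ▸ hk₀.symm), hk₀.symm⟩]
      ring
  -- decrease deltas
  have hΔm_le : ∀ i, Vmax (Function.update Q i (Q i - 1)) - Vmax Q ≤ 0 := by
    intro i
    have := sup_dec_le Q i
    unfold Vmax
    rw [← hMdef]
    have : ((Finset.univ.sup (Function.update Q i (Q i - 1)) : ℕ) : ℝ) ≤ (M : ℝ) := by
      exact_mod_cast this
    linarith
  have hΔm_ge : ∀ i, (-1 : ℝ) ≤ Vmax (Function.update Q i (Q i - 1)) - Vmax Q := by
    intro i
    have h1 : M - 1 ≤ Finset.univ.sup (Function.update Q i (Q i - 1)) :=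
      sup_dec_ge Q i ⟨k₀, hk₀.symm⟩
    unfold Vmax
    rw [← hMdef]
    have h2 : ((M - 1 : ℕ) : ℝ) ≤ ((Finset.univ.sup (Function.update Q i (Q i - 1)) : ℕ) : ℝ) := by
      exact_mod_cast h1
    rcases Nat.eq_zero_or_pos M with h0 | h0
    · have : (0:ℝ) ≤ ((Finset.univ.sup (Function.update Q i (Q i - 1)) : ℕ) : ℝ) := by positivity
      rw [h0]; push_cast; linarith
    · rw [Nat.cast_sub h0] at h2; push_cast at h2 ⊢; linarith
  have hΔm_zero : ∀ i, i ≠ k₀ → Vmax (Function.update Q i (Q i - 1)) - Vmax Q = 0 := by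
    intro i hik
    unfold Vmax
    rw [← hMdef, sup_update_of_exists Q i (Q i - 1)
      (by have := hle i; omega) ⟨k₀, fun e => hik e.symm, hk₀.symm⟩]
    ring
  -- split drift
  have hdrift : driftVmax lam ε Q =
      (∑ i, rPlusEps lam ε Q i * (Vmax (Function.update Q i (Q i + 1)) - Vmax Q))
      + ∑ i, (if 0 < Q i then (1:ℝ) else 0) * (Vmax (Function.update Q i (Q i - 1)) - Vmax Q) := by
    unfold driftVmax; rw [Finset.sum_add_distrib]
  set A := ∑ i, rPlusEps lam ε Q i * (Vmax (Function.update Q i (Q i + 1)) - Vmax Q) with hAdef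
  set D := ∑ i, (if 0 < Q i then (1:ℝ) else 0) * (Vmax (Function.update Q i (Q i - 1)) - Vmax Q) with hDdef
  -- departure sum bounds
  have hD_le : D ≤ 0 := by
    refine Finset.sum_nonpos fun i _ => ?_
    have h1 : (0:ℝ) ≤ if 0 < Q i then (1:ℝ) else 0 := by positivity
    exact mul_nonpos_of_nonneg_of_nonpos h1 (hΔm_le i)
  have hD_ge : (-1 : ℝ) ≤ D := by
    rw [hDdef, Finset.sum_eq_single k₀
      (fun i _ hik => by rw [hΔm_zero i hik, mul_zero])
      (fun h => absurd (Finset.mem_univ k₀) h)]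
    by_cases h : 0 < Q k₀
    · rw [if_pos h, one_mul]; exact hΔm_ge k₀
    · rw [if_neg h, zero_mul]; norm_num
  -- arrival rate on the set of maximizers
  have hr : ∀ i ∈ S, rPlusEps lam ε Q i
      = (2 * lam / ((n : ℝ) - 1)) *
        (((n : ℝ) - (S.card : ℝ)) * ε + ∑ j ∈ S.erase i, (if i < j then (1:ℝ) else 0)) := by
    intro i hi
    have hQi : Q i = M := (hmemS i).1 hi
    unfold rPlusEps
    congr 1
    have hsub : S.erase i ⊆ Finset.univ.erase i :=
      Finset.erase_subset_erase _ (Finset.subset_univ S)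
    rw [← Finset.sum_sdiff hsub]
    have hset : Finset.univ.erase i \ S.erase i = Finset.univ \ S := by
      ext j
      simp only [Finset.mem_sdiff, Finset.mem_erase, Finset.mem_univ, true_and, and_true]
      constructor
      · rintro ⟨hji, h⟩
        intro hjS
        exact h ⟨hji, hjS⟩
      · intro h
        exact ⟨fun e => h (e ▸ hi), fun ⟨_, hjS⟩ => h hjS⟩
    rw [hset]
    have h1 : ∑ j ∈ Finset.univ \ S, pEps ε (Q i) (Q j) i j
        = ((n : ℝ) - (S.card : ℝ)) * ε := by
      rw [Finset.sum_congr rfl (fun j hj => ?_), Finset.sum_const]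
      · rw [Finset.card_sdiff_of_subset (Finset.subset_univ S)]
        simp only [Finset.card_univ, Fintype.card_fin, nsmul_eq_mul]
        rw [Nat.cast_sub hScardn]
      · have hjS : j ∉ S := (Finset.mem_sdiff.1 hj).2
        have hQj : Q j ≠ M := fun h => hjS ((hmemS j).2 h)
        have hlt : Q j < Q i := by have := hle j; omega
        unfold pEps
        rw [if_neg (by omega), if_pos hlt, if_neg (by rintro ⟨h, -⟩; omega)]
        ring
    have h2 : ∑ j ∈ S.erase i, pEps ε (Q i) (Q j) i j
        = ∑ j ∈ S.erase i, (if i < j then (1:ℝ) else 0) := by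
      refine Finset.sum_congr rfl fun j hj => ?_
      have hQj : Q j = M := (hmemS j).1 (Finset.mem_of_mem_erase hj)
      have hq : Q i = Q j := by omega
      unfold pEps
      rw [if_neg (by omega), if_neg (by omega)]
      simp [hq]
    rw [h1, h2]
  -- arrival sum
  have hA : A = ∑ i ∈ S, rPlusEps lam ε Q i := by
    rw [hAdef, Finset.sum_congr rfl (fun i _ => by rw [hΔplus i]), hSdef,
      Finset.sum_filter]
    refine Finset.sum_congr rfl fun i _ => ?_
    by_cases h : Q i = M
    · rw [if_pos h, if_pos h, mul_one]
    · rw [if_neg h, if_neg h, mul_zero]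
  set c : ℝ := 2 * lam / ((n : ℝ) - 1) with hcdef
  set P : ℝ := ∑ i ∈ S, ∑ j ∈ S.erase i, (if i < j then (1:ℝ) else 0) with hPdef
  have hAeq : A = c * ((S.card : ℝ) * (((n : ℝ) - (S.card : ℝ)) * ε) + P) := by
    rw [hA, Finset.sum_congr rfl hr, ← Finset.mul_sum, Finset.sum_add_distrib,
      Finset.sum_const, nsmul_eq_mul, hPdef]
  have hP2 : 2 * P = (S.card : ℝ) * ((S.card : ℝ) - 1) := pair_count S
  have hn1 : (0:ℝ) < (n : ℝ) - 1 := by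
    have : (2:ℝ) ≤ (n : ℝ) := by exact_mod_cast hn
    linarith
  have hc0 : 0 ≤ c := by
    rw [hcdef]; positivity
  have hs1 : (1:ℝ) ≤ (S.card : ℝ) := by exact_mod_cast hScard1
  have hsn : (S.card : ℝ) ≤ (n : ℝ) := by exact_mod_cast hScardn
  have hnR : (2:ℝ) ≤ (n : ℝ) := by exact_mod_cast hn
  set sR : ℝ := (S.card : ℝ)
  set nR : ℝ := (n : ℝ)
  -- lower bound on the arrival sum
  have key1 : 0 ≤ ε * (nR - 1 - sR) + sR / 2 := by nlinarith
  have key2 : 0 ≤ (sR - 1) * (ε * (nR - 1 - sR) + sR / 2) :=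
    mul_nonneg (by linarith) key1
  have hT_lb : ε * (nR - 1) ≤ sR * ((nR - sR) * ε) + P := by nlinarith
  have hA_lb : 2 * ε * lam ≤ A := by
    rw [hAeq]
    have h3 : c * (ε * (nR - 1)) ≤ c * (sR * ((nR - sR) * ε) + P) :=
      mul_le_mul_of_nonneg_left hT_lb hc0
    have h4 : c * (ε * (nR - 1)) = 2 * ε * lam := by
      rw [hcdef]; field_simp
    linarith
  -- upper bound on the arrival sum
  have hT_ub : sR * ((nR - sR) * ε) + P ≤ nR * (nR - 1) / 2 := by
    rcases eq_or_lt_of_le hScardn with h | h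
    · have hsr : sR = nR := by simp [sR, nR, h]
      have e1 : P = nR * (nR - 1) / 2 := by rw [hsr] at hP2; linarith
      have e2 : sR * ((nR - sR) * ε) = 0 := by rw [hsr]; ring
      linarith
    · have hsr : sR + 1 ≤ nR := by
        have : (S.card : ℝ) + 1 ≤ (n : ℝ) := by exact_mod_cast h
        simpa using this
      have h3 : 0 ≤ (nR - sR) * (nR - sR - 1) :=
        mul_nonneg (by linarith) (by linarith)
      have h4 : 0 ≤ sR * (nR - sR) * (1 - ε) :=
        mul_nonneg (mul_nonneg (by linarith) (by linarith)) (by linarith)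
      nlinarith
  have hA_ub : A ≤ nR * lam := by
    rw [hAeq]
    have h3 : c * (sR * ((nR - sR) * ε) + P) ≤ c * (nR * (nR - 1) / 2) :=
      mul_le_mul_of_nonneg_left hT_ub hc0
    have h4 : c * (nR * (nR - 1) / 2) = nR * lam := by
      rw [hcdef]; field_simp
    linarith
  -- conclude
  have h2el : (1:ℝ) ≤ 2 * ε * lam := by
    have h1 : 2 * ε * (1 / (2 * ε)) = 1 := by field_simp
    have h2 : 2 * ε * (1 / (2 * ε)) ≤ 2 * ε * lam := by
      apply mul_le_mul_of_nonneg_left hlam; positivity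
    linarith
  refine ⟨⟨?_, by linarith⟩, ?_⟩
  · rw [hdrift]; linarith
  · rw [hdrift]; linarith
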